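/- Let P be a property of separable C*-algebras that is preserved by hereditary subalgebras of separable C*-algebras, meaning: whenever a separable C*-algebra E satisfies P and H is a hereditary C*-subalgebra of E, then H satisfies P. Then the property 'separably satisfies P' is preserved by hereditary subalgebras among all C*-algebras: if a C*-algebra A separably satisfies P and B is a hereditary C*-subalgebra of A, then B separably satisfies P. -/
import Mathlib


open TopologicalSpace

universe u

/-- A property of C*-algebras: a predicate on (non-unital) C*-algebras. -/
abbrev CStarProp : Type (u + 1) := ∀ (B : Type u) [NonUnitalCStarAlgebra B], Prop

/-- Invariance of a property of C*-algebras under *-isomorphism. -/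
def CStarProp.IsoInvariant (P : CStarProp.{u}) : Prop :=
  ∀ (B C : Type u) [NonUnitalCStarAlgebra B] [NonUnitalCStarAlgebra C],
    (B ≃⋆ₐ[ℂ] C) → P B → P C

/-- `P` holds for a closed star-subalgebra of a C*-algebra, regarded as a
C*-algebra in its own right. -/
def SatSub {A : Type u} [NonUnitalCStarAlgebra A] (P : CStarProp.{u})
    (S : NonUnitalStarSubalgebra ℂ A) (hS : IsClosed (S : Set A)) : Prop :=
  letI : IsClosed (S : Set A) := hS
  P S

/-- `P` is preserved under sequential inductive limits with injective connecting maps: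
for every C*-algebra `C` and every increasing sequence of separable closed
star-subalgebras of `C` each satisfying `P`, the closure of their union satisfies `P`. -/
def LimitClosed (P : CStarProp.{u}) : Prop :=
  ∀ (C : Type u) [NonUnitalCStarAlgebra C] (S : ℕ → NonUnitalStarSubalgebra ℂ C),
    Monotone S →
    ∀ (hcl : ∀ n, IsClosed (S n : Set C)),
    (∀ n, SeparableSpace (S n)) →
    (∀ n, SatSub P (S n) (hcl n)) →
    ∀ (T : NonUnitalStarSubalgebra ℂ C) (hT : (T : Set C) = closure (⋃ n, (S n : Set C))),
      SatSub P T (by rw [hT]; exact isClosed_closure)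

/-- `A` separably satisfies `P`: every separable closed star-subalgebra of `A` is
contained in a separable closed star-subalgebra of `A` satisfying `P`. -/
def SepSat (P : CStarProp.{u}) (A : Type u) [NonUnitalCStarAlgebra A] : Prop :=
  ∀ S₀ : NonUnitalStarSubalgebra ℂ A, IsClosed (S₀ : Set A) → SeparableSpace S₀ →
    ∃ (S : NonUnitalStarSubalgebra ℂ A) (hS : IsClosed (S : Set A)),
      SeparableSpace S ∧ S₀ ≤ S ∧ SatSub P S hS


/-- A closed star-subalgebra, regarded as a C*-algebra in its own right,
separably satisfies `P`. -/
def SepSatSub {A : Type u} [NonUnitalCStarAlgebra A] (P : CStarProp.{u})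
    (S : NonUnitalStarSubalgebra ℂ A) (hS : IsClosed (S : Set A)) : Prop :=
  letI : IsClosed (S : Set A) := hS
  SepSat P S

/-- `H` is a hereditary C*-subalgebra of `A`: a closed star-subalgebra such that whenever
`0 ≤ a ≤ h` with `h ∈ H`, also `a ∈ H`.  Here positivity in a C*-algebra is expressed in the
canonical way: `0 ≤ y` iff `y = star z * z` for some `z`. -/
def IsHereditary {A : Type u} [NonUnitalCStarAlgebra A]
    (H : NonUnitalStarSubalgebra ℂ A) : Prop :=
  ∀ a h : A, h ∈ H → (∃ z : A, a = star z * z) → (∃ z : A, h - a = star z * z) → a ∈ H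

/-- If `P` is a property of separable C*-algebras preserved by hereditary
subalgebras of separable C*-algebras, then 'separably satisfies `P`' is preserved by
hereditary subalgebras among all C*-algebras: if `A` separably satisfies `P` and `B` is a
hereditary C*-subalgebra of `A`, then `B` separably satisfies `P`. -/
theorem sepSat_of_hereditary {A : Type u} [NonUnitalCStarAlgebra A]
    (P : CStarProp.{u})
    (hiso : P.IsoInvariant)
    (hher : ∀ (E : Type u) [NonUnitalCStarAlgebra E], SeparableSpace E → P E →
      ∀ (H : NonUnitalStarSubalgebra ℂ E), IsHereditary H →
        ∀ (hHc : IsClosed (H : Set E)), SatSub P H hHc)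
    (hA : SepSat P A)
    (B : NonUnitalStarSubalgebra ℂ A)
    (hBher : IsHereditary B)
    (hBc : IsClosed (B : Set A)) :
    SepSatSub P B hBc := by
  letI : IsClosed (B : Set A) := hBc
  intro S₀ hS₀c hS₀sep
  -- push S₀ into A
  let ι : B →⋆ₙₐ[ℂ] A := NonUnitalStarSubalgebraClass.subtype B
  let S₀' : NonUnitalStarSubalgebra ℂ A := S₀.map ι
  have hset : (S₀' : Set A) = Subtype.val '' (S₀ : Set B) := rfl
  have hvalCE : Topology.IsClosedEmbedding (Subtype.val : B → A) := hBc.isClosedEmbedding_subtypeVal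
  have hS₀'c : IsClosed (S₀' : Set A) := by
    rw [hset]; exact hvalCE.isClosedMap _ hS₀c
  have hf : ∀ x : S₀, (x : B) ∈ S₀ := fun x => x.2
  let f : S₀ → S₀' := fun x => ⟨((x : B) : A), ⟨(x : B), x.2, rfl⟩⟩
  have hfc : Continuous f :=
    Continuous.subtype_mk (continuous_subtype_val.comp continuous_subtype_val) _
  have hfs : Function.Surjective f := by
    rintro ⟨y, hy⟩
    rw [NonUnitalStarSubalgebra.mem_map] at hy
    obtain ⟨x, hx, hxy⟩ := hy
    exact ⟨⟨x, hx⟩, Subtype.ext hxy⟩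
  have hS₀'sep : SeparableSpace S₀' := hfs.denseRange.separableSpace hfc
  obtain ⟨S, hSc, hSsep, hle, hPS⟩ := hA S₀' hS₀'c hS₀'sep
  letI : IsClosed (S : Set A) := hSc
  -- the hereditary subalgebra of S
  let H : NonUnitalStarSubalgebra ℂ S := B.comap (NonUnitalStarSubalgebraClass.subtype S)
  have hHc : IsClosed (H : Set S) := hBc.preimage continuous_subtype_val
  have hHher : IsHereditary H := by
    rintro a h hh ⟨z, hz⟩ ⟨w, hw⟩
    refine hBher (a : A) (h : A) hh ⟨(z : A), ?_⟩ ⟨(w : A), ?_⟩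
    · exact congrArg Subtype.val hz
    · exact congrArg Subtype.val hw
  have hPH : SatSub P H hHc := hher S hSsep hPS H hHher hHc
  -- the corresponding subalgebra of B
  let T : NonUnitalStarSubalgebra ℂ B := S.comap (NonUnitalStarSubalgebraClass.subtype B)
  have hTc : IsClosed (T : Set B) := hSc.preimage continuous_subtype_val
  letI : IsClosed (T : Set B) := hTc
  letI : IsClosed (H : Set S) := hHc
  -- iso between H and T
  let e : H ≃⋆ₐ[ℂ] T :=
    { toFun := fun x => ⟨⟨(x : S), x.2⟩, x.1.2⟩
      invFun := fun x => ⟨⟨(x : B), x.2⟩, x.1.2⟩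
      left_inv := fun _ => rfl
      right_inv := fun _ => rfl
      map_mul' := fun _ _ => rfl
      map_add' := fun _ _ => rfl
      map_smul' := fun _ _ => rfl
      map_star' := fun _ => rfl }
  have hPT : P T := hiso H T e hPH
  have hec : Continuous (e : H → T) :=
    Continuous.subtype_mk (Continuous.subtype_mk
      (continuous_subtype_val.comp continuous_subtype_val) _) _
  haveI : SecondCountableTopology S := UniformSpace.secondCountable_of_separable S
  haveI : SeparableSpace H := inferInstance
  have hTsep : SeparableSpace T := e.surjective.denseRange.separableSpace hec
  refine ⟨T, hTc, hTsep, ?_, hPT⟩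
  intro b hb
  exact hle ⟨b, hb, rfl⟩
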